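/- Let p ≥ 1 be an odd integer, κ < 0, α := −κ > 0, λ ∈ ℝ with λ ≠ 0, and ε > 0. Let y : [0,∞) → ℝ be differentiable satisfying the scalar modal ODE ẏ(t) = κ·y(t) + λ·y(t)^{p+1} for all t ≥ 0, with ε < |y(0)|. Set s := sign(y(0)) and b := s·λ, and assume |y(0)| < (α/b)^{1/p} in the case b > 0, and ε^{−p} − b/α > 0. Then the hitting time T := (1/(p·α))·ln( (ε^{−p} − b/α) / (|y(0)|^{−p} − b/α) ) satisfies T > 0, |y(T)| = ε, and |y(t)| > ε for all t ∈ [0, T). -/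

import Mathlib

open Set Real Filter

/-- Hitting time for an odd-p mode (λ ≠ 0), with sign-dependent constant b. -/
theorem stmt_13 (p : ℕ) (hp : 1 ≤ p) (hpo : Odd p)
    (κ : ℝ) (hκ : κ < 0) (α : ℝ) (hα : α = -κ)
    (lam : ℝ) (hlam : lam ≠ 0) (ε : ℝ) (hε : 0 < ε)
    (y : ℝ → ℝ)
    (hy : ∀ t : ℝ, 0 ≤ t → HasDerivAt y (κ * y t + lam * y t ^ (p + 1)) t)
    (hy0 : ε < |y 0|)
    (b : ℝ) (hb : b = Real.sign (y 0) * lam)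
    (hroa : 0 < b → |y 0| < (α / b) ^ ((1 : ℝ) / (p : ℝ)))
    (harg : 0 < ε ^ (-(p : ℤ)) - b / α)
    (T : ℝ)
    (hT : T = (1 / ((p : ℝ) * α)) *
      Real.log ((ε ^ (-(p : ℤ)) - b / α) / (|y 0| ^ (-(p : ℤ)) - b / α))) :
    0 < T ∧ |y T| = ε ∧ ∀ t ∈ Set.Ico (0 : ℝ) T, ε < |y t| := by
  have hα0 : 0 < α := by rw [hα]; linarith
  have hpR : (0:ℝ) < (p:ℝ) := by exact_mod_cast hp
  have hpne : (p:ℝ) ≠ 0 := ne_of_gt hpR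
  have hy0pos : 0 < |y 0| := lt_trans hε hy0
  have hy0ne : y 0 ≠ 0 := by
    intro h; rw [h, abs_zero] at hy0pos; exact lt_irrefl _ hy0pos
  set s : ℝ := Real.sign (y 0) with hs
  have hs2 : s * s = 1 := by
    rcases lt_or_gt_of_ne hy0ne with h | h
    · rw [hs, Real.sign_of_neg h]; norm_num
    · rw [hs, Real.sign_of_pos h]; norm_num
  have hs1 : |s| = 1 := by
    rcases lt_or_gt_of_ne hy0ne with h | h
    · rw [hs, Real.sign_of_neg h]; norm_num
    · rw [hs, Real.sign_of_pos h]; norm_num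
  have hsy0 : s * y 0 = |y 0| := by
    rcases lt_or_gt_of_ne hy0ne with h | h
    · rw [hs, Real.sign_of_neg h, abs_of_neg h]; ring
    · rw [hs, Real.sign_of_pos h, abs_of_pos h]; ring
  have hspow : s ^ (p + 1) = 1 := by
    obtain ⟨m, hm⟩ := hpo
    have h2 : p + 1 = 2 * (m + 1) := by omega
    rw [h2, pow_mul, sq, hs2, one_pow]
  -- basic quantities
  set u0 : ℝ := |y 0| ^ (-(p : ℤ)) with hu0def
  set e0 : ℝ := ε ^ (-(p : ℤ)) with he0def
  have hu0pos : 0 < u0 := zpow_pos hy0pos _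
  have he0pos : 0 < e0 := zpow_pos hε _
  set c : ℝ := u0 - b / α with hcdef
  have hc : 0 < c := by
    rcases le_or_gt b 0 with hb0 | hb0
    · have hba : b / α ≤ 0 := div_nonpos_of_nonpos_of_nonneg hb0 hα0.le
      rw [hcdef]; linarith
    · have h1 := hroa hb0
      have hab : 0 < α / b := div_pos hα0 hb0
      have h3 : |y 0| ^ (p:ℝ) < ((α / b) ^ ((1:ℝ)/(p:ℝ))) ^ (p:ℝ) :=
        Real.rpow_lt_rpow (abs_nonneg _) h1 hpR
      rw [← Real.rpow_mul hab.le, one_div, inv_mul_cancel₀ hpne, Real.rpow_one] at h3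
      have h2' : |y 0| ^ (p : ℕ) < α / b := by
        rwa [Real.rpow_natCast] at h3
      have h4 : (α / b)⁻¹ < (|y 0| ^ (p:ℕ))⁻¹ := by
        gcongr
      rw [hcdef, hu0def, zpow_neg, zpow_natCast]
      rw [inv_div] at h4
      linarith
  set q : ℝ := (p : ℝ) * α with hqdef
  have hq0 : 0 < q := mul_pos hpR hα0
  set u : ℝ → ℝ := fun t => b / α + c * Real.exp (q * t) with hudef
  have hu0 : u 0 = u0 := by
    simp only [hudef, mul_zero, Real.exp_zero, mul_one, hcdef]; ring
  have humono : ∀ t1 t2 : ℝ, t1 < t2 → u t1 < u t2 := by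
    intro t1 t2 h
    have h1 : Real.exp (q * t1) < Real.exp (q * t2) :=
      Real.exp_lt_exp.2 (mul_lt_mul_of_pos_left h hq0)
    have h2 := mul_lt_mul_of_pos_left h1 hc
    simp only [hudef]
    exact (add_lt_add_iff_left _).2 h2
  have humono' : ∀ t1 t2 : ℝ, t1 ≤ t2 → u t1 ≤ u t2 := by
    intro t1 t2 h
    rcases eq_or_lt_of_le h with rfl | h
    · exact le_refl _
    · exact (humono _ _ h).le
  have hupos : ∀ t : ℝ, 0 ≤ t → 0 < u t := by
    intro t ht
    have := humono' 0 t ht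
    rw [hu0] at this
    linarith
  -- hitting time
  set R : ℝ := (e0 - b / α) / c with hRdef
  have hR0 : 0 < R := div_pos harg hc
  have hqT : q * T = Real.log R := by
    rw [hT]; field_simp
  have hexpT : Real.exp (q * T) = R := by rw [hqT, Real.exp_log hR0]
  have huT : u T = e0 := by
    simp only [hudef, hexpT, hRdef]
    field_simp
    ring
  have he0u0 : u0 < e0 := by
    have h1 : ε ^ (p:ℕ) < |y 0| ^ (p:ℕ) := by
      apply pow_lt_pow_left₀ hy0 hε.le
      omega
    have h2 : (|y 0| ^ (p:ℕ))⁻¹ < (ε ^ (p:ℕ))⁻¹ := by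
      gcongr
    rw [hu0def, he0def, zpow_neg, zpow_natCast, zpow_neg, zpow_natCast]
    exact h2
  have hR1 : 1 < R := by
    rw [hRdef, lt_div_iff₀ hc, hcdef]; linarith
  have hT0 : 0 < T := by
    rw [hT]
    exact mul_pos (by positivity) (Real.log_pos hR1)
  -- the explicit solution z
  set r : ℝ := -(1 / (p : ℝ)) with hrdef
  have hr0 : r < 0 := by rw [hrdef]; simp; positivity
  set z : ℝ → ℝ := fun t => u t ^ r with hzdef
  have key : ∀ x : ℝ, 0 < x → (x ^ (-(p : ℤ))) ^ r = x := by
    intro x hx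
    rw [← Real.rpow_intCast x (-(p : ℤ)), ← Real.rpow_mul hx.le]
    rw [show ((-(p:ℤ) : ℤ) : ℝ) * r = 1 by push_cast [hrdef]; field_simp]
    exact Real.rpow_one x
  have hz0 : z 0 = |y 0| := by
    simp only [hzdef, hu0, hu0def]
    exact key _ hy0pos
  have hzT : z T = ε := by
    simp only [hzdef, huT, he0def]
    exact key _ hε
  have hzpos : ∀ t : ℝ, 0 ≤ t → 0 < z t := fun t ht =>
    Real.rpow_pos_of_pos (hupos t ht) r
  have hzanti : ∀ t1 t2 : ℝ, 0 ≤ t1 → t1 < t2 → z t2 < z t1 := by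
    intro t1 t2 h0 h
    exact Real.rpow_lt_rpow_of_neg (hupos t1 h0) (humono t1 t2 h) hr0
  have hzanti' : ∀ t1 t2 : ℝ, 0 ≤ t1 → t1 ≤ t2 → z t2 ≤ z t1 := by
    intro t1 t2 h0 h
    rcases eq_or_lt_of_le h with rfl | h
    · exact le_refl _
    · exact (hzanti t1 t2 h0 h).le
  -- derivative of z
  have hz' : ∀ t : ℝ, 0 ≤ t → HasDerivAt z (κ * z t + b * z t ^ (p + 1)) t := by
    intro t ht
    have hut := hupos t ht
    have hu' : HasDerivAt u (c * (Real.exp (q * t) * q)) t := by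
      have h1 : HasDerivAt (fun x : ℝ => q * x) (q * 1) t := (hasDerivAt_id t).const_mul q
      have h3 := ((h1.exp).const_mul c).const_add (b / α)
      simpa [hudef, mul_one] using h3
    have h4 : HasDerivAt z (c * (Real.exp (q * t) * q) * r * u t ^ (r - 1)) t :=
      hu'.rpow_const (Or.inl hut.ne')
    convert h4 using 1
    have hce : c * Real.exp (q * t) = u t - b / α := by simp only [hudef]; ring
    have e1 : u t ^ (r - 1) * u t = u t ^ r := by
      nth_rewrite 2 [show r = (r - 1) + 1 by ring]
      rw [Real.rpow_add hut, Real.rpow_one]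
    have e2 : (u t ^ r) ^ (p + 1) = u t ^ (r - 1) := by
      rw [← Real.rpow_natCast (u t ^ r) (p + 1), ← Real.rpow_mul hut.le]
      congr 1
      push_cast [hrdef]
      field_simp
      ring
    have hκα : κ = -α := by rw [hα]; ring
    have hqr : q * r = -α := by rw [hqdef, hrdef]; field_simp
    have hba : α * (b / α) = b := by rw [mul_comm, div_mul_cancel₀ b hα0.ne']
    have e3 : c * (Real.exp (q * t) * q) * r * u t ^ (r - 1)
        = (u t - b / α) * (q * r) * u t ^ (r - 1) := by rw [← hce]; ring
    simp only [hzdef]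
    rw [e2, hκα, e3, hqr, ← e1]
    linear_combination (-(u t ^ (r - 1))) * hba
  -- w = s * y solves the same ODE
  set w : ℝ → ℝ := fun t => s * y t with hwdef
  have hw0 : w 0 = |y 0| := hsy0
  have hw' : ∀ t : ℝ, 0 ≤ t → HasDerivAt w (κ * w t + b * w t ^ (p + 1)) t := by
    intro t ht
    have h1 := (hy t ht).const_mul s
    refine h1.congr_deriv ?_
    show s * (κ * y t + lam * y t ^ (p + 1)) = κ * (s * y t) + b * (s * y t) ^ (p + 1)
    rw [mul_pow, hspow, hb]
    ring
  -- Lipschitz bound on S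
  set M : ℝ := |y 0| + 1 with hMdef
  have hM0 : 0 < M := by rw [hMdef]; linarith
  set S : Set ℝ := Icc (ε / 2) M with hSdef
  set C : ℝ := |κ| + |b| * (((p:ℝ) + 1) * M ^ p) with hCdef
  have hC0 : 0 ≤ C := by rw [hCdef]; positivity
  have hlip : ∀ _t : ℝ, LipschitzOnWith C.toNNReal (fun x => κ * x + b * x ^ (p + 1)) S := by
    intro _t
    apply Convex.lipschitzOnWith_of_nnnorm_hasDerivWithin_le
      (f' := fun x => κ + b * (((p:ℕ) + 1) * x ^ p)) (convex_Icc _ _)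
    · intro x hx
      have h1 : HasDerivAt (fun x : ℝ => κ * x + b * x ^ (p + 1))
          (κ * 1 + b * ((↑(p+1)) * x ^ p)) x := by
        exact ((hasDerivAt_id x).const_mul κ).add ((hasDerivAt_pow (p+1) x).const_mul b)
      have h2 := h1.hasDerivWithinAt (s := S)
      convert h2 using 1
      push_cast
      ring
    · intro x hx
      have hxM : |x| ≤ M := by
        rw [abs_le]
        constructor
        · have := hx.1; simp only [hSdef, mem_Icc] at hx; linarith [hx.1]
        · simp only [hSdef, mem_Icc] at hx; exact hx.2
      have hbound : ‖κ + b * (((p:ℕ) + 1) * x ^ p)‖ ≤ C := by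
        rw [Real.norm_eq_abs, hCdef]
        calc |κ + b * (((p:ℕ) + 1) * x ^ p)| ≤ |κ| + |b * (((p:ℕ) + 1) * x ^ p)| := abs_add_le _ _
          _ = |κ| + |b| * (((p:ℝ) + 1) * |x| ^ p) := by
              rw [abs_mul, abs_mul, abs_pow]
              congr 3
              push_cast
              rw [abs_of_nonneg (by positivity)]
          _ ≤ |κ| + |b| * (((p:ℝ) + 1) * M ^ p) := by
              gcongr
      rw [← NNReal.coe_le_coe, coe_nnnorm, Real.coe_toNNReal _ hC0]
      exact hbound
  -- uniqueness principle
  have huniq : ∀ t₁ ∈ Icc (0:ℝ) T, (∀ τ ∈ Icc (0:ℝ) t₁, w τ ∈ S) → EqOn w z (Icc 0 t₁) := by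
    intro t₁ ht₁ hmem
    have hzS : ∀ τ ∈ Ico (0:ℝ) t₁, z τ ∈ S := by
      intro τ hτ
      have h1 : z τ ≤ |y 0| := by
        rw [← hz0]; exact hzanti' 0 τ (le_refl _) hτ.1
      have h2 : ε ≤ z τ := by
        rw [← hzT]
        exact hzanti' τ T hτ.1 (le_trans hτ.2.le ht₁.2)
      simp only [hSdef, mem_Icc, hMdef]
      constructor <;> linarith
    exact ODE_solution_unique_of_mem_Icc_right (v := fun _ x => κ * x + b * x ^ (p + 1))
      (s := fun _ => S) (fun t _ => hlip t)
      (fun τ hτ => ((hw' τ hτ.1).continuousAt.continuousWithinAt))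
      (fun τ hτ => ((hw' τ hτ.1).hasDerivWithinAt))
      (fun τ hτ => hmem τ ⟨hτ.1, hτ.2.le⟩)
      (fun τ hτ => ((hz' τ hτ.1).continuousAt.continuousWithinAt))
      (fun τ hτ => ((hz' τ hτ.1).hasDerivWithinAt))
      hzS
      (hw0.trans hz0.symm)
  -- escape-time argument
  set B : Set ℝ := {t | t ∈ Icc (0:ℝ) T ∧ ∀ τ ∈ Icc (0:ℝ) t, w τ ∈ S} with hBdef
  have hw0S : w 0 ∈ S := by
    rw [hw0]; simp only [hSdef, mem_Icc, hMdef]; constructor <;> linarith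
  have h0B : (0:ℝ) ∈ B := by
    refine ⟨⟨le_refl _, hT0.le⟩, ?_⟩
    intro τ hτ
    have : τ = 0 := le_antisymm hτ.2 hτ.1
    rw [this]; exact hw0S
  have hBne : B.Nonempty := ⟨0, h0B⟩
  have hBdd : BddAbove B := ⟨T, fun t ht => ht.1.2⟩
  set t₁ : ℝ := sSup B with ht₁def
  have ht₁0 : 0 ≤ t₁ := le_csSup hBdd h0B
  have ht₁T : t₁ ≤ T := csSup_le hBne (fun t ht => ht.1.2)
  have hax : ∀ τ : ℝ, 0 ≤ τ → τ < t₁ → w τ ∈ S := by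
    intro τ h0 hlt
    obtain ⟨tb, htb, hlt'⟩ := exists_lt_of_lt_csSup hBne hlt
    exact htb.2 τ ⟨h0, hlt'.le⟩
  have ht₁B : t₁ ∈ B := by
    refine ⟨⟨ht₁0, ht₁T⟩, ?_⟩
    intro τ hτ
    rcases lt_or_eq_of_le hτ.2 with hlt | heq
    · exact hax τ hτ.1 hlt
    · rw [heq]
      rcases eq_or_lt_of_le ht₁0 with h0 | h0
      · rw [← h0]; exact hw0S
      · have hcont : Tendsto w (nhdsWithin t₁ (Iio t₁)) (nhds (w t₁)) :=
          ((hw' t₁ ht₁0).continuousAt.continuousWithinAt).tendsto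
        have hev : ∀ᶠ x in nhdsWithin t₁ (Iio t₁), w x ∈ S := by
          filter_upwards [Ioo_mem_nhdsLT_of_mem (⟨h0, le_refl t₁⟩ : t₁ ∈ Ioc 0 t₁)] with x hx
          exact hax x hx.1.le hx.2
        exact (isClosed_Icc).mem_of_tendsto hcont hev
  have heq₁ : EqOn w z (Icc 0 t₁) := huniq t₁ ht₁B.1 ht₁B.2
  have ht₁eq : t₁ = T := by
    by_contra hne
    have hlt : t₁ < T := lt_of_le_of_ne ht₁T hne
    have hwz : w t₁ = z t₁ := heq₁ ⟨ht₁0, le_refl _⟩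
    have hzint : z t₁ ∈ Ioo (ε/2) M := by
      have h1 : z t₁ ≤ |y 0| := by rw [← hz0]; exact hzanti' 0 t₁ (le_refl _) ht₁0
      have h2 : ε < z t₁ := by rw [← hzT]; exact hzanti t₁ T ht₁0 hlt
      simp only [mem_Ioo, hMdef]
      constructor <;> linarith
    have hev : ∀ᶠ x in nhds t₁, w x ∈ Ioo (ε/2) M :=
      (hw' t₁ ht₁0).continuousAt (isOpen_Ioo.mem_nhds (hwz ▸ hzint))
    obtain ⟨δ, hδ0, hδ⟩ := Metric.eventually_nhds_iff.mp hev
    set t₂ : ℝ := min T (t₁ + δ/2) with ht₂def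
    have ht₁t₂ : t₁ < t₂ := lt_min hlt (by linarith)
    have ht₂B : t₂ ∈ B := by
      refine ⟨⟨le_trans ht₁0 ht₁t₂.le, min_le_left _ _⟩, ?_⟩
      intro τ hτ
      rcases le_or_gt τ t₁ with h | h
      · exact ht₁B.2 τ ⟨hτ.1, h⟩
      · have hd : dist τ t₁ < δ := by
          rw [Real.dist_eq, abs_of_pos (by linarith)]
          have : τ ≤ t₁ + δ/2 := le_trans hτ.2 (min_le_right _ _)
          linarith
        exact Ioo_subset_Icc_self (hδ hd)
    have : t₂ ≤ t₁ := le_csSup hBdd ht₂B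
    linarith
  have heqT : EqOn w z (Icc 0 T) := by rw [← ht₁eq]; exact heq₁
  -- conclusion
  have habs : ∀ t ∈ Icc (0:ℝ) T, |y t| = z t := by
    intro t ht
    have h1 : w t = z t := heqT ht
    have h2 : |y t| = |w t| := by
      simp only [hwdef]
      rw [abs_mul, hs1, one_mul]
    rw [h2, h1, abs_of_pos (hzpos t ht.1)]
  refine ⟨hT0, ?_, ?_⟩
  · rw [habs T ⟨hT0.le, le_refl _⟩, hzT]
  · intro t ht
    rw [habs t ⟨ht.1, ht.2.le⟩, ← hzT]
    exact hzanti t T ht.1 ht.2
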